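/- arXiv:1404.6000 — 3 statements merged into one kernel-verified Lean document; each statement's English description precedes it below -/
import Mathlib

section
/- Let x be the column of X indexed by an inlier node i in community k, where X is the block matrix with diagonal blocks J_{l_1},...,J_{l_r} (all-ones matrices) and arbitrary entries in [0,1] in the outlier rows/columns; let y = x/‖x‖₂. If i, j are inliers in the same community k, then ⟨y_i, y_j⟩ ≥ l_k/(l_k + m), hence ‖y_i - y_j‖² ≤ 2m/l_k; if i, j are inliers in different communities, then ⟨y_i, y_j⟩ ≤ m/n_min, hence ‖y_i - y_j‖² ≥ 2 - 2m/n_min. -/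
open scoped RealInnerProductSpace

theorem stmt2 {n m r : ℕ} (X : Matrix (Fin n ⊕ Fin m) (Fin n ⊕ Fin m) ℝ)
    (φ : Fin n → Fin r) (l : Fin r → ℕ) (nmin : ℕ)
    (hsym : X.IsSymm)
    (h01 : ∀ a b, 0 ≤ X a b ∧ X a b ≤ 1)
    (hin : ∀ i j : Fin n, X (Sum.inl i) (Sum.inl j) = if φ i = φ j then 1 else 0)
    (hl : ∀ k, l k = (Finset.univ.filter fun i => φ i = k).card)
    (hnmin : ∀ k, nmin ≤ l k) (hnminpos : 0 < nmin)
    (x : Fin n → EuclideanSpace ℝ (Fin n ⊕ Fin m))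
    (hx : ∀ i a, x i a = X a (Sum.inl i))
    (y : Fin n → EuclideanSpace ℝ (Fin n ⊕ Fin m))
    (hy : ∀ i, y i = ‖x i‖⁻¹ • x i) :
    (∀ i j : Fin n, φ i = φ j →
      ((l (φ i) : ℝ) / ((l (φ i) : ℝ) + m) ≤ ⟪y i, y j⟫ ∧
        ‖y i - y j‖ ^ 2 ≤ 2 * (m : ℝ) / (l (φ i) : ℝ))) ∧
    (∀ i j : Fin n, φ i ≠ φ j →
      (⟪y i, y j⟫ ≤ (m : ℝ) / (nmin : ℝ) ∧
        2 - 2 * (m : ℝ) / (nmin : ℝ) ≤ ‖y i - y j‖ ^ 2)) := by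
  classical
  set P : Fin n → Fin n → ℝ :=
    fun i j => ∑ b : Fin m, X (Sum.inr b) (Sum.inl i) * X (Sum.inr b) (Sum.inl j) with hPdef
  have hP0 : ∀ i j, 0 ≤ P i j := fun i j =>
    Finset.sum_nonneg fun b _ => mul_nonneg (h01 _ _).1 (h01 _ _).1
  have hPm : ∀ i j, P i j ≤ m := by
    intro i j
    calc P i j ≤ ∑ _b : Fin m, (1:ℝ) :=
          Finset.sum_le_sum fun b _ =>
            mul_le_one₀ (h01 _ _).2 (h01 _ _).1 (h01 _ _).2
      _ = m := by simp
  have hinner : ∀ i j : Fin n, ⟪x i, x j⟫ =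
      (if φ i = φ j then (l (φ i) : ℝ) else 0) + P i j := by
    intro i j
    rw [PiLp.inner_apply]
    simp only [RCLike.inner_apply, conj_trivial]
    rw [Fintype.sum_sum_type]
    congr 1
    · have key : ∀ a : Fin n, x i (Sum.inl a) * x j (Sum.inl a)
          = if φ a = φ i ∧ φ a = φ j then (1:ℝ) else 0 := by
        intro a
        rw [hx, hx, hin, hin]
        by_cases h1 : φ a = φ i <;> by_cases h2 : φ a = φ j <;> simp [h1, h2]
      rw [Finset.sum_congr rfl fun a _ => (mul_comm (x j (Sum.inl a)) (x i (Sum.inl a))).trans (key a)]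
      by_cases h : φ i = φ j
      · have : ∀ a : Fin n, (φ a = φ i ∧ φ a = φ j) ↔ φ a = φ i := by
          intro a; constructor
          · exact fun ha => ha.1
          · exact fun ha => ⟨ha, ha.trans h⟩
        simp only [this, if_pos h]
        rw [Finset.sum_boole]
        simp [hl]
      · have : ∀ a : Fin n, ¬(φ a = φ i ∧ φ a = φ j) := by
          intro a ⟨ha1, ha2⟩; exact h (ha1 ▸ ha2)
        simp [this, h]
    · simp only [hx, hPdef]; exact Finset.sum_congr rfl fun b _ => mul_comm _ _
  have hnormsq : ∀ i : Fin n, ‖x i‖ ^ 2 = (l (φ i) : ℝ) + P i i := by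
    intro i
    rw [← real_inner_self_eq_norm_sq, hinner, if_pos rfl]
  have hlge1 : ∀ i : Fin n, (1:ℝ) ≤ (l (φ i) : ℝ) := by
    intro i
    have : 0 < (Finset.univ.filter fun a => φ a = φ i).card :=
      Finset.card_pos.mpr ⟨i, by simp⟩
    have : 1 ≤ l (φ i) := by rw [hl]; omega
    exact_mod_cast this
  have hxpos : ∀ i : Fin n, 0 < ‖x i‖ := by
    intro i
    have h1 := hnormsq i
    have h2 := hlge1 i
    have h3 := hP0 i i
    nlinarith [norm_nonneg (x i)]
  have hyinner : ∀ i j : Fin n, ⟪y i, y j⟫ = (‖x i‖ * ‖x j‖)⁻¹ * ⟪x i, x j⟫ := by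
    intro i j
    rw [hy, hy, real_inner_smul_left, real_inner_smul_right, mul_inv]
    ring
  have hynorm : ∀ i : Fin n, ‖y i‖ = 1 := by
    intro i
    rw [hy, norm_smul, norm_inv, norm_norm, inv_mul_cancel₀ (ne_of_gt (hxpos i))]
  have hsub : ∀ i j : Fin n, ‖y i - y j‖ ^ 2 = 2 - 2 * ⟪y i, y j⟫ := by
    intro i j
    rw [norm_sub_sq_real, hynorm, hynorm]
    ring
  have hdpos : ∀ i j : Fin n, 0 < ‖x i‖ * ‖x j‖ :=
    fun i j => mul_pos (hxpos i) (hxpos j)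
  constructor
  · intro i j h
    have hL : (0:ℝ) < (l (φ i) : ℝ) := lt_of_lt_of_le one_pos (hlge1 i)
    have hLm : (0:ℝ) < (l (φ i) : ℝ) + m := by positivity
    -- upper bound on the product of norms
    have hni : ‖x i‖ ^ 2 ≤ (l (φ i) : ℝ) + m := by
      have := hnormsq i; have := hPm i i; linarith
    have hnj : ‖x j‖ ^ 2 ≤ (l (φ i) : ℝ) + m := by
      have := hnormsq j; have := hPm j j; rw [h]; linarith
    have hdle : ‖x i‖ * ‖x j‖ ≤ (l (φ i) : ℝ) + m := by
      nlinarith [sq_nonneg (‖x i‖ - ‖x j‖), norm_nonneg (x i), norm_nonneg (x j)]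
    have hval : ⟪y i, y j⟫ = ((l (φ i) : ℝ) + P i j) / (‖x i‖ * ‖x j‖) := by
      rw [hyinner, hinner, if_pos h, div_eq_inv_mul]
    have hlow : (l (φ i) : ℝ) / ((l (φ i) : ℝ) + m) ≤ ⟪y i, y j⟫ := by
      rw [hval]
      apply div_le_div₀ (by linarith [hP0 i j]) (by linarith [hP0 i j]) (hdpos i j) hdle
    refine ⟨hlow, ?_⟩
    rw [hsub]
    have e1 : 2 - 2 * ((l (φ i) : ℝ) / ((l (φ i) : ℝ) + m))
        = 2 * (m : ℝ) / ((l (φ i) : ℝ) + m) := by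
      field_simp
      ring
    have e2 : 2 * (m : ℝ) / ((l (φ i) : ℝ) + m) ≤ 2 * (m : ℝ) / (l (φ i) : ℝ) := by
      apply div_le_div_of_nonneg_left (by positivity) hL (by linarith [Nat.cast_nonneg (α := ℝ) m])
    linarith
  · intro i j h
    have hN : (0:ℝ) < (nmin : ℝ) := by exact_mod_cast hnminpos
    have hNi : (nmin : ℝ) ≤ ‖x i‖ ^ 2 := by
      have h1 := hnormsq i
      have h2 : (nmin : ℝ) ≤ (l (φ i) : ℝ) := by exact_mod_cast hnmin (φ i)
      have := hP0 i i; linarith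
    have hNj : (nmin : ℝ) ≤ ‖x j‖ ^ 2 := by
      have h1 := hnormsq j
      have h2 : (nmin : ℝ) ≤ (l (φ j) : ℝ) := by exact_mod_cast hnmin (φ j)
      have := hP0 j j; linarith
    have hdge : (nmin : ℝ) ≤ ‖x i‖ * ‖x j‖ := by
      have hsq : (nmin : ℝ) * (nmin : ℝ) ≤ (‖x i‖ * ‖x j‖) * (‖x i‖ * ‖x j‖) := by
        calc (nmin : ℝ) * (nmin : ℝ) ≤ ‖x i‖ ^ 2 * ‖x j‖ ^ 2 :=
              mul_le_mul hNi hNj (le_of_lt hN) (by positivity)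
          _ = (‖x i‖ * ‖x j‖) * (‖x i‖ * ‖x j‖) := by ring
      nlinarith [hdpos i j, hN]
    have hval : ⟪y i, y j⟫ = P i j / (‖x i‖ * ‖x j‖) := by
      rw [hyinner, hinner, if_neg h, div_eq_inv_mul, zero_add]
    have hupp : ⟪y i, y j⟫ ≤ (m : ℝ) / (nmin : ℝ) := by
      rw [hval]
      exact div_le_div₀ (Nat.cast_nonneg m) (hPm i j) hN hdge
    refine ⟨hupp, ?_⟩
    rw [hsub]
    have : 2 * ⟪y i, y j⟫ ≤ 2 * ((m : ℝ) / (nmin : ℝ)) := by linarith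
    have e : 2 * ((m : ℝ) / (nmin : ℝ)) = 2 * (m : ℝ) / (nmin : ℝ) := by ring
    linarith
end

section
/- Under the normalized-column setup (communities of sizes l_1,...,l_r among n inliers, m outliers), the optimal k-means objective with k = r clusters applied to the normalized columns y_1,...,y_N satisfies min over partitions S_1,...,S_r and centers μ_1,...,μ_r of Σ_k Σ_{y_j ∈ S_k} ‖y_j - μ_k‖² ≤ 2mr + 2m. -/
theorem stmt3 {N n m r : ℕ} (hN : N = n + m) (hr : 0 < r)
    (φ : Fin N → Fin (r + 1)) (l : Fin r → ℕ)
    (y : Fin N → EuclideanSpace ℝ (Fin N))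
    (hunit : ∀ i, ‖y i‖ = 1) (hnonneg : ∀ i a, 0 ≤ y i a)
    (hl : ∀ k : Fin r, l k = (Finset.univ.filter fun i => φ i = k.castSucc).card)
    (hlpos : ∀ k, 0 < l k)
    (hm : (Finset.univ.filter fun i => φ i = Fin.last r).card = m)
    (hsame : ∀ i j (k : Fin r), φ i = k.castSucc → φ j = k.castSucc →
      ‖y i - y j‖ ^ 2 ≤ 2 * (m : ℝ) / (l k : ℝ))
    (hall : ∀ i j, ‖y i - y j‖ ^ 2 ≤ 2) :
    ∃ (c : Fin N → Fin r) (μc : Fin r → EuclideanSpace ℝ (Fin N)),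
      ∑ j, ‖y j - μc (c j)‖ ^ 2 ≤ 2 * m * r + 2 * m := by
  classical
  have hrep : ∀ k : Fin r, ∃ i, φ i = k.castSucc := by
    intro k
    have h := hlpos k
    rw [hl k] at h
    obtain ⟨i, hi⟩ := Finset.card_pos.mp h
    exact ⟨i, (Finset.mem_filter.mp hi).2⟩
  choose rep hrep' using hrep
  set c : Fin N → Fin r := fun j =>
    if h : φ j = Fin.last r then ⟨0, hr⟩ else (φ j).castPred h with hc
  set f : Fin (r + 1) → ℝ := fun k =>
    if h : k = Fin.last r then 2 else 2 * (m : ℝ) / (l (k.castPred h) : ℝ) with hf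
  refine ⟨c, fun k => y (rep k), ?_⟩
  have hterm : ∀ j, ‖y j - y (rep (c j))‖ ^ 2 ≤ f (φ j) := by
    intro j
    by_cases h : φ j = Fin.last r
    · simp only [hf, h, dif_pos]
      exact hall j _
    · have hcj : c j = (φ j).castPred h := by simp [hc, h]
      have hφ : φ j = ((φ j).castPred h).castSucc := (Fin.castSucc_castPred _ h).symm
      have := hsame j (rep ((φ j).castPred h)) ((φ j).castPred h) hφ
        (hrep' ((φ j).castPred h))
      simpa [hf, h, hcj] using this
  calc ∑ j, ‖y j - y (rep (c j))‖ ^ 2 ≤ ∑ j, f (φ j) :=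
        Finset.sum_le_sum fun j _ => hterm j
    _ = ∑ k : Fin (r + 1), ∑ j ∈ Finset.univ with φ j = k, f k :=
        (Finset.sum_fiberwise' _ _ _).symm
    _ = ∑ k : Fin (r + 1), ((Finset.univ.filter fun j => φ j = k).card : ℝ) * f k := by
        exact Finset.sum_congr rfl fun k _ => by rw [Finset.sum_const, nsmul_eq_mul]
    _ = 2 * m * r + 2 * m := by
        rw [Fin.sum_univ_castSucc]
        have hlast : ∀ k : Fin r, k.castSucc ≠ Fin.last r := fun k =>
          (Fin.castSucc_lt_last k).ne
        have hmain : ∀ k : Fin r,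
            ((Finset.univ.filter fun j => φ j = k.castSucc).card : ℝ) * f k.castSucc
              = 2 * m := by
          intro k
          have hla : (l k : ℝ) ≠ 0 := Nat.cast_ne_zero.mpr (hlpos k).ne'
          simp only [hf, hlast k, dif_neg, not_false_iff, Fin.castPred_castSucc]
          rw [← hl k]
          field_simp
        simp only [hmain]
        simp only [hf, hm, dif_pos]
        rw [Finset.sum_const, Finset.card_univ, Fintype.card_fin]
        push_cast
        ring
end

section
/- Under the k-means setup with r communities among n inliers and m < n_min/(2r+4) outliers, every true community D_i (i = 1,...,r) constitutes more than 50% of some estimated cluster Ŝ_k; moreover the misclassification rate p/n among inliers satisfies p/n ≤ (2mr+2m)/((1 - m/n_min)n) ≤ (2r+3)m/n. -/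
theorem card_lt_aux {N n : ℕ} (h : n ≤ N) :
    (Finset.univ.filter (fun j : Fin N => (j : ℕ) < n)).card = n := by
  have : ((Finset.univ.filter (fun j : Fin N => (j : ℕ) < n)).card) = (Finset.range n).card := by
    refine Finset.card_bij (fun j _ => (j : ℕ)) ?_ ?_ ?_
    · intro a ha; simp at ha ⊢; exact ha
    · intro a ha b hb hab; exact Fin.val_injective hab
    · intro b hb; simp at hb
      exact ⟨⟨b, lt_of_lt_of_le hb h⟩, by simp [hb]⟩
  simpa using this

theorem norm_sq_aux {E : Type*} [NormedAddCommGroup E] (u v w : E) :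
    ‖u - w‖ ^ 2 ≤ 2 * ‖u - v‖ ^ 2 + 2 * ‖v - w‖ ^ 2 := by
  have h : ‖u - w‖ ≤ ‖u - v‖ + ‖v - w‖ := by
    have : u - w = (u - v) + (v - w) := by abel
    rw [this]; exact norm_add_le _ _
  nlinarith [norm_nonneg (u - v), norm_nonneg (v - w), norm_nonneg (u - w),
    sq_nonneg (‖u - v‖ - ‖v - w‖)]

theorem ratio_aux (a b o CA CB t : ℝ) (ha0 : 0 ≤ a) (hb0 : 0 ≤ b) (ho0 : 0 ≤ o)
    (hCA0 : 0 ≤ CA) (hCB0 : 0 ≤ CB) (ht : 0 < t) (habo : a ≤ b + o)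
    (hcross : a * b * t ≤ b * CA + a * CB) : (a - o) * t ≤ CA + CB := by
  rcases le_or_gt a b with hab | hab
  · rcases eq_or_lt_of_le hb0 with hbz | hbz
    · have haz : a = 0 := le_antisymm (by linarith) ha0
      rw [haz]; nlinarith
    · nlinarith [mul_nonneg (mul_nonneg ho0 ht.le) hb0]
  · have hapos : 0 < a := lt_of_le_of_lt hb0 hab
    nlinarith [mul_nonneg (sub_nonneg.2 hab.le) hCA0,
      mul_le_mul_of_nonneg_left (show a - o ≤ b by linarith) (mul_nonneg ha0 ht.le)]

theorem arith1 (m r nmin li : ℝ) (hm0 : 0 ≤ m) (hr0 : 1 ≤ r) (hnm0 : 0 < nmin)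
    (hmlt : m * (2 * r + 4) < nmin) (hli : nmin ≤ li) :
    2 * m * r + 2 * m < (li - m) * (1 - m / nmin) := by
  have hprod : m / nmin * nmin = m := div_mul_cancel₀ _ (ne_of_gt hnm0)
  have hmnmin : m < nmin := by nlinarith
  have hs1 : m / nmin < 1 := (div_lt_one hnm0).2 hmnmin
  have hs0 : 0 ≤ m / nmin := by positivity
  nlinarith [mul_nonneg (sub_nonneg.2 hli) (by linarith : (0:ℝ) ≤ 1 - m / nmin),
    mul_nonneg hs0 hm0]

theorem arith2 (m r nmin : ℝ) (hm0 : 0 ≤ m) (hr0 : 1 ≤ r) (hnm0 : 0 < nmin)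
    (hmlt : m * (2 * r + 4) < nmin) :
    2 * m * r + 2 * m ≤ (2 * r + 3) * m * (1 - m / nmin) := by
  have hprod : m / nmin * nmin = m := div_mul_cancel₀ _ (ne_of_gt hnm0)
  have hs0 : 0 ≤ m / nmin := by positivity
  have h2 : (2 * r + 3) * m * (m / nmin) * nmin ≤ m * nmin := by
    have : (2 * r + 3) * m * (m / nmin) * nmin = (2 * r + 3) * (m * m) := by
      field_simp
    rw [this]
    nlinarith [mul_le_mul_of_nonneg_left hmlt.le hm0]
  have h3 : (2 * r + 3) * m * (m / nmin) ≤ m := by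
    nlinarith
  nlinarith

theorem stmt19 {N n m r nmin : ℕ} (hN : N = n + m) (hr : 0 < r)
    (ψ : Fin N → Fin r) (l : Fin r → ℕ)
    (hl : ∀ k, l k = (Finset.univ.filter fun i : Fin N => (i : ℕ) < n ∧ ψ i = k).card)
    (hnmin : ∀ k, nmin ≤ l k) (hnminpos : 0 < nmin)
    (hm : (m : ℝ) < (nmin : ℝ) / (2 * r + 4))
    (y : Fin N → EuclideanSpace ℝ (Fin N))
    (hunit : ∀ i, ‖y i‖ = 1) (hnonneg : ∀ i a, 0 ≤ y i a)
    (hsame : ∀ i j : Fin N, (i : ℕ) < n → (j : ℕ) < n → ψ i = ψ j →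
      ‖y i - y j‖ ^ 2 ≤ 2 * (m : ℝ) / (l (ψ i) : ℝ))
    (hdiff : ∀ i j : Fin N, (i : ℕ) < n → (j : ℕ) < n → ψ i ≠ ψ j →
      2 - 2 * (m : ℝ) / (nmin : ℝ) ≤ ‖y i - y j‖ ^ 2)
    (hall : ∀ i j, ‖y i - y j‖ ^ 2 ≤ 2)
    (c : Fin N → Fin r) (μc : Fin r → EuclideanSpace ℝ (Fin N))
    (hmin : ∀ (c' : Fin N → Fin r) (μ' : Fin r → EuclideanSpace ℝ (Fin N)),
      ∑ j, ‖y j - μc (c j)‖ ^ 2 ≤ ∑ j, ‖y j - μ' (c' j)‖ ^ 2)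
    (hcentroid : ∀ k : Fin r, μc k =
      ((Finset.univ.filter fun j => c j = k).card : ℝ)⁻¹ •
        ∑ j ∈ Finset.univ.filter fun j => c j = k, y j)
    (hopt : ∑ j, ‖y j - μc (c j)‖ ^ 2 ≤ 2 * m * r + 2 * m) :
    (∀ i : Fin r, ∃ k : Fin r,
      (Finset.univ.filter fun j => c j = k).card <
        2 * (Finset.univ.filter fun j : Fin N =>
          (j : ℕ) < n ∧ ψ j = i ∧ c j = k).card) ∧
    (∀ (p : ℕ) (P : Fin p → Fin N × Fin N),
      (∀ a, ((P a).1 : ℕ) < n ∧ ((P a).2 : ℕ) < n) →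
      (∀ a, ψ (P a).1 ≠ ψ (P a).2) →
      (∀ a, c (P a).1 = c (P a).2) →
      (∀ a, (P a).1 ≠ (P a).2) →
      (∀ a b, a ≠ b → (P a).1 ≠ (P b).1 ∧ (P a).1 ≠ (P b).2 ∧
        (P a).2 ≠ (P b).1 ∧ (P a).2 ≠ (P b).2) →
      ((p : ℝ) / n ≤ (2 * m * r + 2 * m) / ((1 - (m : ℝ) / nmin) * n) ∧
        (2 * m * r + 2 * m) / ((1 - (m : ℝ) / nmin) * n) ≤ (2 * r + 3) * m / n)) := by
  have hnN : n ≤ N := by omega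
  have hnm0 : (0:ℝ) < nmin := by exact_mod_cast hnminpos
  have hm0 : (0:ℝ) ≤ m := Nat.cast_nonneg m
  have hr0 : (1:ℝ) ≤ r := by exact_mod_cast hr
  have hmlt : (m:ℝ) * (2 * r + 4) < nmin := by
    rw [lt_div_iff₀ (by positivity : (0:ℝ) < 2 * r + 4)] at hm; exact hm
  have hmnmin : (m:ℝ) < nmin := by nlinarith
  have hs1 : (m:ℝ) / nmin < 1 := (div_lt_one hnm0).2 hmnmin
  have hs0 : (0:ℝ) ≤ (m:ℝ) / nmin := by positivity
  have hprod : (m:ℝ) / nmin * nmin = m := div_mul_cancel₀ _ (ne_of_gt hnm0)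
  have htpos : (0:ℝ) < 1 - (m:ℝ) / nmin := by linarith
  -- n is positive
  have hln : ∀ i : Fin r, l i ≤ n := by
    intro i
    rw [hl i]
    calc (Finset.univ.filter fun j : Fin N => (j : ℕ) < n ∧ ψ j = i).card
        ≤ (Finset.univ.filter fun j : Fin N => (j : ℕ) < n).card :=
          Finset.card_le_card (fun j hj => by simp only [Finset.mem_filter] at hj ⊢; exact ⟨hj.1, hj.2.1⟩)
      _ = n := card_lt_aux hnN
  have hnpos : 0 < n := lt_of_lt_of_le hnminpos (le_trans (hnmin ⟨0, hr⟩) (hln ⟨0, hr⟩))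
  have hn0 : (0:ℝ) < n := by exact_mod_cast hnpos
  -- cost of outliers: card of outlier set
  have cardout : (Finset.univ.filter (fun j : Fin N => ¬ ((j : ℕ) < n))).card = m := by
    have h1 := Finset.card_filter_add_card_filter_not
      (s := (Finset.univ : Finset (Fin N))) (p := fun j : Fin N => (j : ℕ) < n)
    rw [card_lt_aux hnN, Finset.card_univ, Fintype.card_fin] at h1
    omega
  -- pair bound
  have pairbound : ∀ (j j' : Fin N) (μ : EuclideanSpace ℝ (Fin N)),
      (j : ℕ) < n → (j' : ℕ) < n → ψ j ≠ ψ j' →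
      1 - (m:ℝ) / nmin ≤ ‖y j - μ‖ ^ 2 + ‖y j' - μ‖ ^ 2 := by
    intro j j' μ hj hj' hne
    have h1 := hdiff j j' hj hj' hne
    have h2 := norm_sq_aux (y j) μ (y j')
    have h3 : ‖μ - y j'‖ = ‖y j' - μ‖ := norm_sub_rev _ _
    rw [h3] at h2
    have h4 : 2 * (m:ℝ) / nmin = 2 * ((m:ℝ) / nmin) := by ring
    linarith
  have fnonneg : ∀ j, (0:ℝ) ≤ ‖y j - μc (c j)‖ ^ 2 := fun j => sq_nonneg _
  constructor
  · -- Part 1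
    intro i
    by_contra hcon
    push_neg at hcon
    set A : Fin r → Finset (Fin N) := fun k =>
      Finset.univ.filter fun j : Fin N => (j : ℕ) < n ∧ ψ j = i ∧ c j = k with hA
    set B : Fin r → Finset (Fin N) := fun k =>
      Finset.univ.filter fun j : Fin N => (j : ℕ) < n ∧ ψ j ≠ i ∧ c j = k with hB
    set O : Fin r → Finset (Fin N) := fun k =>
      Finset.univ.filter fun j : Fin N => ¬ ((j : ℕ) < n) ∧ c j = k with hO
    set S : Fin r → Finset (Fin N) := fun k =>
      Finset.univ.filter fun j : Fin N => c j = k with hS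
    -- cardinalities
    have hScard : ∀ k, (S k).card = (A k).card + (B k).card + (O k).card := by
      intro k
      have hU : A k ∪ B k ∪ O k = S k := by
        ext j; simp only [hA, hB, hO, hS, Finset.mem_union, Finset.mem_filter,
          Finset.mem_univ, true_and]
        tauto
      have d1 : Disjoint (A k) (B k) := by
        rw [Finset.disjoint_left]; intro j hj hj'
        simp only [hA, hB, Finset.mem_filter, Finset.mem_univ, true_and] at hj hj'
        tauto
      have d2 : Disjoint (A k ∪ B k) (O k) := by
        rw [Finset.disjoint_left]; intro j hj hj'
        simp only [hA, hB, hO, Finset.mem_union, Finset.mem_filter,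
          Finset.mem_univ, true_and] at hj hj'
        tauto
      rw [← hU, Finset.card_union_of_disjoint d2, Finset.card_union_of_disjoint d1]
    have hcon2 : ∀ k, 2 * (A k).card ≤ (S k).card := hcon
    have hcon' : ∀ k, (A k).card ≤ (B k).card + (O k).card := by
      intro k
      have h1 := hcon2 k
      have h2 := hScard k
      omega
    -- per-cluster lower bound
    have hclust : ∀ k, ((A k).card - (O k).card : ℝ) * (1 - (m:ℝ)/nmin) ≤
        ∑ j ∈ S k, ‖y j - μc k‖ ^ 2 := by
      intro k
      set a : ℝ := ((A k).card : ℝ) with ha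
      set b : ℝ := ((B k).card : ℝ) with hb
      set o : ℝ := ((O k).card : ℝ) with ho
      set CA : ℝ := ∑ j ∈ A k, ‖y j - μc k‖ ^ 2 with hCA
      set CB : ℝ := ∑ j ∈ B k, ‖y j - μc k‖ ^ 2 with hCB
      have hCA0 : 0 ≤ CA := Finset.sum_nonneg fun j _ => sq_nonneg _
      have hCB0 : 0 ≤ CB := Finset.sum_nonneg fun j _ => sq_nonneg _
      have ha0 : 0 ≤ a := Nat.cast_nonneg _
      have hb0 : 0 ≤ b := Nat.cast_nonneg _
      have ho0 : 0 ≤ o := Nat.cast_nonneg _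
      have habo : a ≤ b + o := by
        have := hcon' k; push_cast [ha, hb, ho]; exact_mod_cast this
      -- cross bound
      have hcross : a * b * (1 - (m:ℝ)/nmin) ≤ b * CA + a * CB := by
        have h1 : ∑ j ∈ A k, ∑ j' ∈ B k, (1 - (m:ℝ)/nmin) ≤
            ∑ j ∈ A k, ∑ j' ∈ B k, (‖y j - μc k‖ ^ 2 + ‖y j' - μc k‖ ^ 2) := by
          refine Finset.sum_le_sum fun j hj => Finset.sum_le_sum fun j' hj' => ?_
          simp only [hA, hB, Finset.mem_filter, Finset.mem_univ, true_and] at hj hj'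
          exact pairbound j j' (μc k) hj.1 hj'.1 (by rw [hj.2.1]; exact fun h => hj'.2.1 h.symm)
        have h2 : ∑ j ∈ A k, ∑ j' ∈ B k, (1 - (m:ℝ)/nmin) = a * b * (1 - (m:ℝ)/nmin) := by
          simp [Finset.sum_const, nsmul_eq_mul, ha, hb]; ring
        have h3 : ∑ j ∈ A k, ∑ j' ∈ B k, (‖y j - μc k‖ ^ 2 + ‖y j' - μc k‖ ^ 2)
            = b * CA + a * CB := by
          simp only [Finset.sum_add_distrib, Finset.sum_const, nsmul_eq_mul]
          rw [← Finset.mul_sum]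
        rw [h2, h3] at h1; exact h1
      -- subset bound
      have hsub : CA + CB ≤ ∑ j ∈ S k, ‖y j - μc k‖ ^ 2 := by
        have hd : Disjoint (A k) (B k) := by
          rw [Finset.disjoint_left]; intro j hj hj'
          simp only [hA, hB, Finset.mem_filter, Finset.mem_univ, true_and] at hj hj'
          tauto
        rw [hCA, hCB, ← Finset.sum_union hd]
        refine Finset.sum_le_sum_of_subset_of_nonneg ?_ (fun j _ _ => sq_nonneg _)
        intro j hj
        simp only [hA, hB, hS, Finset.mem_union, Finset.mem_filter,
          Finset.mem_univ, true_and] at hj ⊢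
        tauto
      exact le_trans (ratio_aux a b o CA CB _ ha0 hb0 ho0 hCA0 hCB0 htpos habo hcross) hsub
    -- sum the cluster bounds
    have hfib : ∑ k : Fin r, ∑ j ∈ S k, ‖y j - μc k‖ ^ 2 = ∑ j, ‖y j - μc (c j)‖ ^ 2 := by
      rw [← Finset.sum_fiberwise_of_maps_to (fun x _ => Finset.mem_univ (c x))
        (fun j => ‖y j - μc (c j)‖ ^ 2)]
      refine Finset.sum_congr rfl fun k _ => Finset.sum_congr rfl fun j hj => ?_
      simp only [hS, Finset.mem_filter] at hj
      rw [hj.2]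
    have hacard : ∑ k : Fin r, (A k).card = l i := by
      rw [hl i]
      rw [Finset.card_eq_sum_card_fiberwise (f := c) (t := Finset.univ)
        (fun x _ => Finset.mem_univ (c x))]
      refine Finset.sum_congr rfl fun k _ => ?_
      congr 1
      simp only [hA, Finset.filter_filter]
      apply Finset.filter_congr; intro j _; tauto
    have hocard : ∑ k : Fin r, (O k).card = m := by
      rw [← cardout]
      rw [Finset.card_eq_sum_card_fiberwise (f := c) (t := Finset.univ)
        (fun x _ => Finset.mem_univ (c x))]
      refine Finset.sum_congr rfl fun k _ => ?_
      congr 1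
      simp only [hO, Finset.filter_filter]
    have hsum : ((l i : ℝ) - m) * (1 - (m:ℝ)/nmin) ≤ ∑ j, ‖y j - μc (c j)‖ ^ 2 := by
      rw [← hfib]
      calc ((l i : ℝ) - m) * (1 - (m:ℝ)/nmin)
          = ∑ k : Fin r, ((A k).card - (O k).card : ℝ) * (1 - (m:ℝ)/nmin) := by
            rw [← Finset.sum_mul]
            congr 1
            rw [Finset.sum_sub_distrib]
            rw [← Nat.cast_sum, ← Nat.cast_sum, hacard, hocard]
        _ ≤ _ := Finset.sum_le_sum fun k _ => hclust k
    -- contradiction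
    have hli : (nmin : ℝ) ≤ l i := by exact_mod_cast hnmin i
    have hfinal : 2 * (m:ℝ) * r + 2 * m < ((l i : ℝ) - m) * (1 - (m:ℝ)/nmin) :=
      arith1 m r nmin (l i) hm0 hr0 hnm0 hmlt hli
    linarith [hopt, hsum]
  · -- Part 2
    intro p P hP1 hP2 hP3 hP4 hP5
    have hpb : (p:ℝ) * (1 - (m:ℝ)/nmin) ≤ 2 * m * r + 2 * m := by
      set e : Fin p × Bool → Fin N := fun x => cond x.2 (P x.1).2 (P x.1).1 with he
      have hinj : ∀ x ∈ (Finset.univ : Finset (Fin p × Bool)),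
          ∀ x' ∈ (Finset.univ : Finset (Fin p × Bool)), e x = e x' → x = x' := by
        rintro ⟨a, ba⟩ - ⟨b, bb⟩ - h
        rcases eq_or_ne a b with rfl | hab
        · cases ba <;> cases bb
          · rfl
          · exact absurd h (hP4 a)
          · exact absurd h.symm (hP4 a)
          · rfl
        · exfalso
          obtain ⟨h1, h2, h3, h4⟩ := hP5 a b hab
          cases ba <;> cases bb
          · exact h1 h
          · exact h2 h
          · exact h3 h
          · exact h4 h
      have hle : ∑ x : Fin p × Bool, ‖y (e x) - μc (c (e x))‖ ^ 2 ≤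
          ∑ j, ‖y j - μc (c j)‖ ^ 2 := by
        have himg := Finset.sum_image (s := Finset.univ) (g := e)
          (f := fun j => ‖y j - μc (c j)‖ ^ 2) hinj
        calc ∑ x : Fin p × Bool, ‖y (e x) - μc (c (e x))‖ ^ 2
            = ∑ j ∈ Finset.univ.image e, ‖y j - μc (c j)‖ ^ 2 := himg.symm
          _ ≤ _ := Finset.sum_le_sum_of_subset_of_nonneg (Finset.subset_univ _)
              (fun j _ _ => sq_nonneg _)
      have hsplit : ∑ x : Fin p × Bool, ‖y (e x) - μc (c (e x))‖ ^ 2 =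
          ∑ a : Fin p, (‖y (P a).1 - μc (c (P a).1)‖ ^ 2 + ‖y (P a).2 - μc (c (P a).2)‖ ^ 2) := by
        rw [Fintype.sum_prod_type]
        refine Finset.sum_congr rfl fun a _ => ?_
        rw [Fintype.sum_bool]
        exact add_comm _ _
      rw [hsplit] at hle
      have hterm : ∀ a : Fin p, 1 - (m:ℝ)/nmin ≤
          ‖y (P a).1 - μc (c (P a).1)‖ ^ 2 + ‖y (P a).2 - μc (c (P a).2)‖ ^ 2 := by
        intro a
        have hc := hP3 a
        rw [← hc]
        exact pairbound _ _ _ (hP1 a).1 (hP1 a).2 (hP2 a)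
      have hlow : (p:ℝ) * (1 - (m:ℝ)/nmin) ≤
          ∑ a : Fin p, (‖y (P a).1 - μc (c (P a).1)‖ ^ 2 + ‖y (P a).2 - μc (c (P a).2)‖ ^ 2) := by
        calc (p:ℝ) * (1 - (m:ℝ)/nmin) = ∑ _a : Fin p, (1 - (m:ℝ)/nmin) := by
              simp [Finset.sum_const, nsmul_eq_mul]; ring
          _ ≤ _ := Finset.sum_le_sum fun a _ => hterm a
      linarith [hle, hopt, hlow]
    constructor
    · rw [div_le_div_iff₀ hn0 (mul_pos htpos hn0)]
      nlinarith
    · rw [div_le_div_iff₀ (mul_pos htpos hn0) hn0]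
      have hkey : 2 * (m:ℝ) * r + 2 * m ≤ (2 * r + 3) * m * (1 - (m:ℝ)/nmin) :=
        arith2 m r nmin hm0 hr0 hnm0 hmlt
      nlinarith
end
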